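/- Let σ, ζ, ε be real symmetric n×n matrices with σ+ζ and σ−ζ positive definite. Then the 2n×2n real block matrix B = [[(σ+ζ)⁻¹, (σ+ζ)⁻¹ε], [ε(σ+ζ)⁻¹, σ−ζ+ε(σ+ζ)⁻¹ε]] is symmetric and positive definite. -/

import Mathlib

open Matrix
open scoped Matrix

/-- The Cherkaev–Gibiansky block matrix associated to a complex admittivity
`γ(∇u) = (σ+iε)∇u + ζ conj(∇u)` is symmetric and positive definite, provided
`σ+ζ` and `σ-ζ` are (symmetric) positive definite. -/
theorem cherkaev_gibiansky_posDef (n : ℕ)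
    (σ ζ ε : Matrix (Fin n) (Fin n) ℝ)
    (hσ : σ.IsSymm) (hζ : ζ.IsSymm) (hε : ε.IsSymm)
    (hpos₁ : (σ + ζ).PosDef) (hpos₂ : (σ - ζ).PosDef) :
    (Matrix.fromBlocks (σ + ζ)⁻¹ ((σ + ζ)⁻¹ * ε)
      (ε * (σ + ζ)⁻¹) (σ - ζ + ε * (σ + ζ)⁻¹ * ε)).IsSymm ∧
    (Matrix.fromBlocks (σ + ζ)⁻¹ ((σ + ζ)⁻¹ * ε)
      (ε * (σ + ζ)⁻¹) (σ - ζ + ε * (σ + ζ)⁻¹ * ε)).PosDef := by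
  set A : Matrix (Fin n) (Fin n) ℝ := (σ + ζ)⁻¹ with hAdef
  have hA : A.PosDef := hpos₁.inv
  have hAH : A.IsHermitian := hA.1
  set B : Matrix (Fin n) (Fin n) ℝ := A * ε with hBdef
  have hBH : Bᴴ = ε * A := by
    rw [hBdef, conjTranspose_mul, hAH.eq, conjTranspose_eq_transpose_of_trivial, hε]
  have hunit : IsUnit (σ + ζ).det := isUnit_iff_ne_zero.mpr (ne_of_gt hpos₁.det_pos)
  haveI : Invertible (σ + ζ) := (σ + ζ).invertibleOfIsUnitDet hunit
  haveI hIA : Invertible A := by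
    rw [hAdef]; exact Matrix.invertibleOfIsUnitDet _ ((σ + ζ).isUnit_nonsing_inv_det hunit)
  have hAinv : A⁻¹ = σ + ζ := by rw [hAdef, Matrix.nonsing_inv_nonsing_inv _ hunit]
  set D : Matrix (Fin n) (Fin n) ℝ := σ - ζ + ε * A * ε with hDdef
  have hSchur : D - Bᴴ * A⁻¹ * B = σ - ζ := by
    rw [hBH, hAinv, hDdef, hBdef]
    have : ε * A * (σ + ζ) * (A * ε) = ε * A * ε := by
      rw [Matrix.mul_assoc (ε * A) (σ+ζ) (A*ε), ← Matrix.mul_assoc (σ+ζ) A ε,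
        Matrix.mul_nonsing_inv _ hunit, Matrix.one_mul]
    rw [this]; abel
  have key : fromBlocks A (A * ε) (ε * A) D = fromBlocks A B Bᴴ D := by
    rw [hBH, hBdef]
  have hHerm : (fromBlocks A B Bᴴ D).IsHermitian := by
    rw [IsHermitian.fromBlocks₁₁ _ _ hAH, hSchur]
    exact hpos₂.1
  constructor
  · rw [key] at *
    rw [Matrix.IsSymm, ← conjTranspose_eq_transpose_of_trivial]
    exact hHerm
  · rw [key]
    refine PosDef.of_dotProduct_mulVec_pos hHerm (fun x hx => ?_)
    have hx' : x = (x ∘ Sum.inl) ⊕ᵥ (x ∘ Sum.inr) := (Sum.elim_comp_inl_inr x).symm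
    rw [dotProduct_mulVec, hx',
      schur_complement_eq₁₁ B D (x ∘ Sum.inl) (x ∘ Sum.inr) hAH, hSchur]
    by_cases hy : (x ∘ Sum.inr) = 0
    · have hxl : (x ∘ Sum.inl) ≠ 0 := by
        intro h
        apply hx
        rw [hx', h, hy]
        ext (i|i) <;> simp
      have h1 : (0:ℝ) < star (x ∘ Sum.inl + (A⁻¹ * B) *ᵥ (x ∘ Sum.inr)) ᵥ*
          A ⬝ᵥ (x ∘ Sum.inl + (A⁻¹ * B) *ᵥ (x ∘ Sum.inr)) := by
        rw [hy, mulVec_zero, add_zero, ← dotProduct_mulVec]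
        exact hA.dotProduct_mulVec_pos hxl
      have h2 : (0:ℝ) ≤ star (x ∘ Sum.inr) ᵥ* (σ - ζ) ⬝ᵥ (x ∘ Sum.inr) := by
        rw [← dotProduct_mulVec]
        exact hpos₂.posSemidef.dotProduct_mulVec_nonneg _
      linarith
    · have h1 : (0:ℝ) ≤ star (x ∘ Sum.inl + (A⁻¹ * B) *ᵥ (x ∘ Sum.inr)) ᵥ*
          A ⬝ᵥ (x ∘ Sum.inl + (A⁻¹ * B) *ᵥ (x ∘ Sum.inr)) := by
        rw [← dotProduct_mulVec]
        exact hA.posSemidef.dotProduct_mulVec_nonneg _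
      have h2 : (0:ℝ) < star (x ∘ Sum.inr) ᵥ* (σ - ζ) ⬝ᵥ (x ∘ Sum.inr) := by
        rw [← dotProduct_mulVec]
        exact hpos₂.dotProduct_mulVec_pos hy
      linarith
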